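/- Closed form of the Ornstein–Uhlenbeck lower confidence bound: For all real numbers θ' > 0 and ρ > 0, inf{1/(2θ) : θ > 0, (θ' − θ)²/(2θ) ≤ ρ} = 1/(2θ') + (ρ − √(ρ² + 2θ'ρ))/(2θ'²), and the infimum is attained at θ = θ' + ρ + √(ρ² + 2θ'ρ). -/
import Mathlib


set_option autoImplicit false

open Real

/-- closed form of the Ornstein–Uhlenbeck lower confidence bound:
for `θ' > 0` and `ρ > 0`,
`inf {1/(2θ) : θ > 0, (θ' − θ)²/(2θ) ≤ ρ} = 1/(2θ') + (ρ − √(ρ² + 2θ'ρ))/(2θ'²)`,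
the infimum being attained at `θ = θ' + ρ + √(ρ² + 2θ'ρ)`. -/
theorem stmt18 (θ' ρ : ℝ) (hθ' : 0 < θ') (hρ : 0 < ρ) :
    IsLeast {y : ℝ | ∃ θ : ℝ, 0 < θ ∧ (θ' - θ) ^ 2 / (2 * θ) ≤ ρ ∧ y = 1 / (2 * θ)}
      (1 / (2 * θ') + (ρ - Real.sqrt (ρ ^ 2 + 2 * θ' * ρ)) / (2 * θ' ^ 2)) ∧
    (0 < θ' + ρ + Real.sqrt (ρ ^ 2 + 2 * θ' * ρ) ∧
      (θ' - (θ' + ρ + Real.sqrt (ρ ^ 2 + 2 * θ' * ρ))) ^ 2 /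
          (2 * (θ' + ρ + Real.sqrt (ρ ^ 2 + 2 * θ' * ρ))) ≤ ρ ∧
      1 / (2 * (θ' + ρ + Real.sqrt (ρ ^ 2 + 2 * θ' * ρ))) =
        1 / (2 * θ') + (ρ - Real.sqrt (ρ ^ 2 + 2 * θ' * ρ)) / (2 * θ' ^ 2)) := by
  set s := Real.sqrt (ρ ^ 2 + 2 * θ' * ρ) with hs
  have hs0 : 0 ≤ s := Real.sqrt_nonneg _
  have hs2 : s ^ 2 = ρ ^ 2 + 2 * θ' * ρ := by
    rw [hs, Real.sq_sqrt]; nlinarith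
  have hθs : 0 < θ' + ρ + s := by linarith
  have hcon : (θ' - (θ' + ρ + s)) ^ 2 / (2 * (θ' + ρ + s)) ≤ ρ := by
    rw [div_le_iff₀ (by linarith)]
    nlinarith
  have heq : 1 / (2 * (θ' + ρ + s)) = 1 / (2 * θ') + (ρ - s) / (2 * θ' ^ 2) := by
    rw [div_add_div _ _ (by positivity) (by positivity), div_eq_div_iff (by positivity) (by positivity)]
    nlinarith
  refine ⟨⟨⟨θ' + ρ + s, hθs, hcon, heq.symm⟩, ?_⟩, hθs, hcon, heq⟩
  rintro y ⟨θ, hθ, hc, rfl⟩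
  rw [div_le_iff₀ (by linarith)] at hc
  have hle : θ ≤ θ' + ρ + s := by nlinarith [sq_nonneg (θ - (θ' + ρ) + s)]
  rw [← heq]
  exact one_div_le_one_div_of_le (by linarith) (by linarith)
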